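/- If V₁(x) = Σ_{t=0}^∞ (1-p)^t {}_H P^t(x,E) for x ∉ H and V₁ = 0 on H, and if p ∫_E V₁(y) ν(dy) < 1, then the function V defined by V(x) = V₁(x) / (1 - p ∫_E V₁(y) ν(dy)) for x ∉ H and V(x) = 0 for x ∈ H satisfies the equation V(x) = 1 + p ∫_E V(y) ν(dy) + (1-p) ∫_E V(y) {}_H P(x,dy) for all x ∉ H. -/

import Mathlib

open MeasureTheory ProbabilityTheory ENNReal

/-- The `t`-step iterate `P^t` of a transition kernel, with `P^0(x,·) = δ_x`. -/
noncomputable def iterKernel {E : Type*} [MeasurableSpace E] (P : Kernel E E) :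
    ℕ → Kernel E E
  | 0 => Kernel.id
  | t + 1 => P ∘ₖ iterKernel P t

/-- The iterates of the taboo kernel `{}_H P(x,Γ) := P(x, Γ \ H)`, given the
complement `Hᶜ` as a measurable set; `{}_H P^0(x,Γ) = δ_x(Γ \ H)`, so that
`{}_H P^0(x,E) = 1{x ∉ H}`. -/
noncomputable def tabooIter {E : Type*} [MeasurableSpace E] (P : Kernel E E)
    {Hc : Set E} (hHc : MeasurableSet Hc) : ℕ → Kernel E E
  | 0 => Kernel.id.restrict hHc
  | t + 1 => (P.restrict hHc) ∘ₖ tabooIter P hHc t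
open scoped Classical


section Aux
variable {E : Type*} [MeasurableSpace E] (P : Kernel E E) [IsMarkovKernel P]
  {Hc : Set E} (hHc : MeasurableSet Hc)

omit [IsMarkovKernel P] in
lemma taboo_zero_of_not_mem {x : E} (hx : x ∉ Hc) (t : ℕ) :
    tabooIter P hHc t x = 0 := by
  induction t with
  | zero =>
      show (Kernel.id.restrict hHc) x = 0
      rw [Kernel.restrict_apply, Kernel.id_apply, Measure.restrict_eq_zero,
        Measure.dirac_apply' _ hHc, Set.indicator_of_notMem hx]
  | succ t ih =>
      show ((P.restrict hHc) ∘ₖ tabooIter P hHc t) x = 0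
      rw [Kernel.comp_apply, ih, Measure.bind_zero_left]

lemma taboo_mass_le_one (t : ℕ) (x : E) :
    tabooIter P hHc t x Set.univ ≤ 1 := by
  induction t generalizing x with
  | zero =>
      show (Kernel.id.restrict hHc) x Set.univ ≤ 1
      rw [Kernel.restrict_apply]
      exact le_trans (Measure.restrict_apply_le _ _) (by simp)
  | succ t ih =>
      show ((P.restrict hHc) ∘ₖ tabooIter P hHc t) x Set.univ ≤ 1
      rw [Kernel.comp_apply' _ _ _ MeasurableSet.univ]
      calc ∫⁻ y, (P.restrict hHc) y Set.univ ∂(tabooIter P hHc t x)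
          ≤ ∫⁻ _, 1 ∂(tabooIter P hHc t x) := by
            refine lintegral_mono fun y => ?_
            rw [Kernel.restrict_apply, Measure.restrict_apply MeasurableSet.univ]
            exact le_trans (measure_mono (Set.subset_univ _)) (by simp)
        _ ≤ 1 := by rw [lintegral_one]; exact ih x

omit [IsMarkovKernel P] in
lemma taboo_succ {x : E} (hx : x ∈ Hc) (t : ℕ) :
    tabooIter P hHc (t + 1) x
      = ((P.restrict hHc) x).bind (tabooIter P hHc t) := by
  induction t with
  | zero =>
      show ((P.restrict hHc) ∘ₖ Kernel.id.restrict hHc) x = _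
      rw [Kernel.comp_apply, Kernel.restrict_apply, Kernel.id_apply,
        restrict_dirac' hHc, if_pos hx, Measure.dirac_bind (Kernel.measurable _)]
      refine Measure.ext fun s hs => ?_
      rw [Measure.bind_apply hs (Kernel.measurable _).aemeasurable]
      have h1 : ∀ y : E, tabooIter P hHc 0 y s = (s ∩ Hc).indicator 1 y := by
        intro y
        show (Kernel.id.restrict hHc) y s = _
        rw [Kernel.restrict_apply, Kernel.id_apply, Measure.restrict_apply hs,
          Measure.dirac_apply' _ (hs.inter hHc)]
      rw [MeasureTheory.lintegral_congr h1, lintegral_indicator_one (hs.inter hHc),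
        Kernel.restrict_apply, Measure.restrict_apply hs,
        Measure.restrict_apply (hs.inter hHc), Set.inter_assoc, Set.inter_self]
  | succ t ih =>
      show ((P.restrict hHc) ∘ₖ tabooIter P hHc (t + 1)) x = _
      rw [Kernel.comp_apply, ih,
        Measure.bind_bind (Kernel.measurable _).aemeasurable (Kernel.measurable _).aemeasurable]
      have h2 : ⇑(tabooIter P hHc (t + 1))
          = fun a => ((tabooIter P hHc t) a).bind ⇑(P.restrict hHc) := by
        funext a
        exact Kernel.comp_apply _ _ _
      rw [h2]

lemma taboo_mass_succ {x : E} (hx : x ∈ Hc) (t : ℕ) :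
    tabooIter P hHc (t + 1) x Set.univ
      = ∫⁻ y, tabooIter P hHc t y Set.univ ∂((P.restrict hHc) x) := by
  rw [taboo_succ P hHc hx,
    Measure.bind_apply MeasurableSet.univ (Kernel.measurable _).aemeasurable]

omit [IsMarkovKernel P] in
lemma taboo_mass_zero {x : E} (hx : x ∈ Hc) :
    tabooIter P hHc 0 x Set.univ = 1 := by
  show (Kernel.id.restrict hHc) x Set.univ = 1
  rw [Kernel.restrict_apply, Kernel.id_apply, restrict_dirac' hHc, if_pos hx]
  simp
end Aux

section W
variable {E : Type*} [MeasurableSpace E] (P : Kernel E E) [IsMarkovKernel P]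
  {Hc : Set E} (hHc : MeasurableSet Hc) (p : ℝ)

/-- Auxiliary: the ENNReal-valued version of `V₁`. -/
noncomputable def Wfun (x : E) : ℝ≥0∞ :=
  ∑' t : ℕ, (ENNReal.ofReal (1 - p)) ^ t * tabooIter P hHc t x Set.univ

omit [IsMarkovKernel P] in
lemma W_meas : Measurable (Wfun P hHc p) :=
  Measurable.ennreal_tsum fun t =>
    (Kernel.measurable_coe _ MeasurableSet.univ).const_mul _

lemma W_le (x : E) : Wfun P hHc p x ≤ (1 - ENNReal.ofReal (1 - p))⁻¹ := by
  calc Wfun P hHc p x ≤ ∑' t : ℕ, (ENNReal.ofReal (1 - p)) ^ t := by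
        refine ENNReal.tsum_le_tsum fun t => ?_
        calc (ENNReal.ofReal (1 - p)) ^ t * tabooIter P hHc t x Set.univ
            ≤ (ENNReal.ofReal (1 - p)) ^ t * 1 :=
              mul_le_mul_right (taboo_mass_le_one P hHc t x) _
          _ = _ := mul_one _
    _ = _ := ENNReal.tsum_geometric _

lemma W_ne_top (hp : p ∈ Set.Ioo (0 : ℝ) 1) (x : E) : Wfun P hHc p x ≠ ⊤ := by
  refine ne_top_of_le_ne_top ?_ (W_le P hHc p x)
  rw [Ne, ENNReal.inv_eq_top, tsub_eq_zero_iff_le]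
  exact not_le.2 (ENNReal.ofReal_lt_one.2 (by linarith [hp.1]))

set_option maxHeartbeats 1000000 in
lemma W_eq {x : E} (hx : x ∈ Hc) :
    Wfun P hHc p x = 1 + ENNReal.ofReal (1 - p) *
      ∫⁻ y, Wfun P hHc p y ∂((P.restrict hHc) x) := by
  set a := ENNReal.ofReal (1 - p) with ha
  rw [Wfun, tsum_eq_zero_add' ENNReal.summable]
  congr 1
  · rw [pow_zero, one_mul, taboo_mass_zero P hHc hx]
  · calc ∑' t : ℕ, a ^ (t + 1) * tabooIter P hHc (t + 1) x Set.univ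
        = ∑' t : ℕ, a * (a ^ t * ∫⁻ y, tabooIter P hHc t y Set.univ
            ∂((P.restrict hHc) x)) := by
          refine tsum_congr fun t => ?_
          rw [taboo_mass_succ P hHc hx, pow_succ]; ring
      _ = a * ∑' t : ℕ, ∫⁻ y, a ^ t * tabooIter P hHc t y Set.univ
            ∂((P.restrict hHc) x) := by
          rw [ENNReal.tsum_mul_left]
          congr 1
          exact tsum_congr fun t =>
            (lintegral_const_mul _ (Kernel.measurable_coe _ MeasurableSet.univ)).symm
      _ = a * ∫⁻ y, Wfun P hHc p y ∂((P.restrict hHc) x) := by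
          rw [← lintegral_tsum fun t =>
            ((Kernel.measurable_coe _ MeasurableSet.univ).const_mul _).aemeasurable]
          rfl
end W

/-- If `p ∫ V₁ dν < 1`, then `V(x) = V₁(x)/(1 - p ∫ V₁ dν)` for `x ∉ H`,
`V = 0` on `H`, solves `V(x) = 1 + p ∫ V dν + (1-p) ∫ V(y) {}_H P(x,dy)` for
all `x ∉ H`. -/
theorem stmt6 {E : Type*} [MeasurableSpace E]
    (P : Kernel E E) [IsMarkovKernel P]
    (ν : Measure E) [IsProbabilityMeasure ν]
    (p : ℝ) (hp : p ∈ Set.Ioo (0 : ℝ) 1)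
    (H : Set E) (hH : MeasurableSet H)
    (V₁ : E → ℝ)
    (hV₁ : ∀ x, V₁ x = if x ∈ H then 0 else
      ∑' t : ℕ, (1 - p) ^ t * (tabooIter P hH.compl t x Set.univ).toReal)
    (hlt : p * ∫ y, V₁ y ∂ν < 1)
    (V : E → ℝ)
    (hV : ∀ x, V x = if x ∈ H then 0 else V₁ x / (1 - p * ∫ y, V₁ y ∂ν)) :
    ∀ x ∉ H, V x = 1 + p * ∫ y, V y ∂ν +
      (1 - p) * ∫ y, V y ∂((P.restrict hH.compl) x) := by
  have hp1 : (0:ℝ) < 1 - p := by linarith [hp.2]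
  -- V₁ is the toReal of Wfun
  have hWV : ∀ x, V₁ x = (Wfun P hH.compl p x).toReal := by
    intro x
    rw [hV₁ x]
    by_cases hx : x ∈ H
    · rw [if_pos hx]
      have hz : ∀ t, tabooIter P hH.compl t x = 0 :=
        taboo_zero_of_not_mem P hH.compl (by simpa using hx)
      simp [Wfun, hz]
    · rw [if_neg hx]
      have hterm : ∀ t : ℕ,
          (ENNReal.ofReal (1 - p)) ^ t * tabooIter P hH.compl t x Set.univ ≠ ⊤ :=
        fun t => ENNReal.mul_ne_top (ENNReal.pow_ne_top ENNReal.ofReal_ne_top)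
          (ne_top_of_le_ne_top ENNReal.one_ne_top (taboo_mass_le_one P hH.compl t x))
      rw [Wfun, ENNReal.tsum_toReal_eq hterm]
      refine tsum_congr fun t => ?_
      rw [ENNReal.toReal_mul, ENNReal.toReal_pow, ENNReal.toReal_ofReal hp1.le]
  -- key recursion for V₁
  have key : ∀ x ∉ H, V₁ x = 1 + (1 - p) *
      ∫ y, V₁ y ∂((P.restrict hH.compl) x) := by
    intro x hx
    have hxc : x ∈ Hᶜ := hx
    have hL : ∫⁻ y, Wfun P hH.compl p y ∂((P.restrict hH.compl) x) ≠ ⊤ := by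
      refine ne_top_of_le_ne_top (b := (1 - ENNReal.ofReal (1 - p))⁻¹ * 1) ?_ ?_
      · exact ENNReal.mul_ne_top
          (ENNReal.inv_ne_top.2 (by
            rw [Ne, tsub_eq_zero_iff_le]
            exact not_le.2 (ENNReal.ofReal_lt_one.2 (by linarith [hp.1]))))
          ENNReal.one_ne_top
      · calc ∫⁻ y, Wfun P hH.compl p y ∂((P.restrict hH.compl) x)
            ≤ ∫⁻ _, (1 - ENNReal.ofReal (1 - p))⁻¹ ∂((P.restrict hH.compl) x) :=
              lintegral_mono fun y => W_le P hH.compl p y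
          _ = (1 - ENNReal.ofReal (1 - p))⁻¹ * (P.restrict hH.compl) x Set.univ :=
              lintegral_const _
          _ ≤ _ := by
              refine mul_le_mul_right ?_ _
              rw [Kernel.restrict_apply, Measure.restrict_apply MeasurableSet.univ]
              exact le_trans (measure_mono (Set.subset_univ _)) (by simp)
    have hInt : ∫ y, V₁ y ∂((P.restrict hH.compl) x)
        = (∫⁻ y, Wfun P hH.compl p y ∂((P.restrict hH.compl) x)).toReal := by
      simp_rw [hWV]
      exact integral_toReal (W_meas P hH.compl p).aemeasurable
        (ae_of_all _ fun y => lt_top_iff_ne_top.2 (W_ne_top P hH.compl p hp y))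
    rw [hWV x, W_eq P hH.compl p hxc,
      ENNReal.toReal_add ENNReal.one_ne_top (ENNReal.mul_ne_top ENNReal.ofReal_ne_top hL),
      ENNReal.toReal_one, ENNReal.toReal_mul, ENNReal.toReal_ofReal hp1.le, hInt]
  -- algebra
  set I := ∫ y, V₁ y ∂ν with hI
  set c := 1 - p * I with hc
  have hc0 : 0 < c := by rw [hc]; linarith
  have hVeq : ∀ y, V y = V₁ y / c := by
    intro y
    rw [hV y]
    split_ifs with h
    · rw [hV₁ y, if_pos h, zero_div]
    · rfl
  intro x hx
  have h2 : ∫ y, V y ∂ν = I / c := by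
    simp_rw [hVeq]; rw [integral_div, hI]
  have h3 : ∫ y, V y ∂((P.restrict hH.compl) x)
      = (∫ y, V₁ y ∂((P.restrict hH.compl) x)) / c := by
    simp_rw [hVeq]; rw [integral_div]
  rw [hVeq x, h2, h3]
  set J := ∫ y, V₁ y ∂((P.restrict hH.compl) x) with hJ
  have hkey := key x hx
  have h4 : 1 + p * (I / c) + (1 - p) * (J / c) = (c + (p * I + (1 - p) * J)) / c := by
    field_simp
    ring
  rw [h4]
  have h5 : c + (p * I + (1 - p) * J) = V₁ x := by rw [hc]; linarith
  rw [h5]
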